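/- Let p and q be Farey neighbours in ℚ∞. Then there exist exactly two elements w of ℚ∞ such that {p, q, w} is a Farey triple, namely w = p⊕q and w = p⊖q; moreover p⊕q ≠ p⊖q. -/

import Mathlib

/-- `ℚ∞ = ℚ ∪ {∞}`, ordered with `∞ = ⊤` as the greatest element. -/
abbrev QInf : Type := WithTop ℚ

/-- The numerator `d(q)` of the reduced representation `q = d(q)/r(q)`; `d(∞) = 1`. -/
def fnum : QInf → ℤ := WithTop.recTopCoe 1 (fun q => q.num)

/-- The denominator `r(q)` of the reduced representation `q = d(q)/r(q)`; `r(∞) = 0`. -/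
def fden : QInf → ℤ := WithTop.recTopCoe 0 (fun q => (q.den : ℤ))

/-- The element of `ℚ∞` represented by the fraction `a / b`: it is `∞` if `b = 0`,
and otherwise the rational number `a / b` (normalized so that the denominator is
positive and the fraction is in lowest terms). -/
def fmk (a b : ℤ) : QInf := if b = 0 then (⊤ : QInf) else (((a : ℚ) / (b : ℚ)) : ℚ)

/-- The Farey distance `Δ(p,q) = |d(p)r(q) - d(q)r(p)|`. -/
def fdist (p q : QInf) : ℤ := |fnum p * fden q - fnum q * fden p|

/-- `p` and `q` are Farey neighbours if `Δ(p,q) = 1`. -/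
def FareyNbr (p q : QInf) : Prop := fdist p q = 1

/-- The Farey sum `p ⊕ q = (d(p) + d(q)) / (r(p) + r(q))`. -/
def fsum (p q : QInf) : QInf := fmk (fnum p + fnum q) (fden p + fden q)

/-- The Farey difference `p ⊖ q = (d(p) - d(q)) / (r(p) - r(q))`. -/
def fdiff (p q : QInf) : QInf := fmk (fnum p - fnum q) (fden p - fden q)

/-- A Farey triple: a three-element subset of `ℚ∞` whose elements are pairwise
Farey neighbours. -/
def IsFareyTriple (s : Set QInf) : Prop := s.ncard = 3 ∧ s.Pairwise FareyNbr

/-- The element replacing `p` in the mutation of the Farey triple `{p, q, r}` in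
direction `p`: it is `q ⊖ r` if `p` lies strictly between `q` and `r`, and `q ⊕ r`
otherwise. -/
def fareyMutEl (p q r : QInf) : QInf :=
  if (q < p ∧ p < r) ∨ (r < p ∧ p < q) then fdiff q r else fsum q r

/-- The mutation of the Farey triple `{p, q, r}` in direction `p`. -/
def fareyMut (p q r : QInf) : Set QInf := {fareyMutEl p q r, q, r}

/-- The complexity `c(q) = |d(q)| + r(q) + |d(q) - r(q)|`. -/
def complexity (x : QInf) : ℤ := |fnum x| + fden x + |fnum x - fden x|

@[simp] lemma fnum_top : fnum ⊤ = 1 := rfl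
@[simp] lemma fden_top : fden ⊤ = 0 := rfl
@[simp] lemma fnum_coe (x : ℚ) : fnum (x : QInf) = x.num := rfl
@[simp] lemma fden_coe (x : ℚ) : fden (x : QInf) = (x.den : ℤ) := rfl

lemma fden_nonneg (x : QInf) : 0 ≤ fden x := by
  cases x using WithTop.recTopCoe with
  | top => simp
  | coe x => simp

lemma fmk_self (x : QInf) : fmk (fnum x) (fden x) = x := by
  cases x using WithTop.recTopCoe with
  | top => simp [fmk]
  | coe x =>
    simp only [fnum_coe, fden_coe, fmk]
    simp only [Nat.cast_eq_zero, x.den_ne_zero, ↓reduceIte]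
    norm_cast
    exact Rat.num_divInt_den x

lemma fmk_neg (a b : ℤ) : fmk (-a) (-b) = fmk a b := by
  unfold fmk
  by_cases hb : b = 0
  · simp [hb]
  · rw [if_neg hb, if_neg (by simpa using hb)]
    push_cast
    rw [neg_div_neg_eq]

lemma fnum_fmk {a b : ℤ} (hb : 0 < b) (h : IsCoprime a b) : fnum (fmk a b) = a := by
  rw [fmk, if_neg hb.ne']
  exact Rat.num_div_eq_of_coprime hb (Int.isCoprime_iff_gcd_eq_one.mp h)

lemma fden_fmk {a b : ℤ} (hb : 0 < b) (h : IsCoprime a b) : fden (fmk a b) = b := by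
  rw [fmk, if_neg hb.ne']
  exact Rat.den_div_eq_of_coprime hb (Int.isCoprime_iff_gcd_eq_one.mp h)

lemma fdist_fmk_of_nonneg (x : QInf) {a b : ℤ} (hb : 0 ≤ b) (h : IsCoprime a b) :
    fdist x (fmk a b) = |fnum x * b - a * fden x| := by
  rcases hb.lt_or_eq with hb | hb
  · rw [fdist, fnum_fmk hb h, fden_fmk hb h]
  · subst hb
    have ha : a = 1 ∨ a = -1 := Int.isUnit_iff.mp (isCoprime_zero_right.mp h)
    have : fmk a 0 = ⊤ := by simp [fmk]
    rw [this, fdist]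
    rcases ha with ha | ha <;> subst ha <;> simp [abs_neg]

lemma fdist_fmk (x : QInf) {a b : ℤ} (h : IsCoprime a b) :
    fdist x (fmk a b) = |fnum x * b - a * fden x| := by
  rcases le_or_gt 0 b with hb | hb
  · exact fdist_fmk_of_nonneg x hb h
  · rw [← fmk_neg, fdist_fmk_of_nonneg x (by omega) h.neg_neg]
    rw [show fnum x * -b - -a * fden x = -(fnum x * b - a * fden x) by ring, abs_neg]

lemma fdist_symm (x y : QInf) : fdist x y = fdist y x := by
  rw [fdist, fdist, abs_sub_comm]

@[simp] lemma fdist_self (x : QInf) : fdist x x = 0 := by simp [fdist, mul_comm]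

lemma fmk_smul {e : ℤ} (he : e = 1 ∨ e = -1) (a b : ℤ) : fmk (e * a) (e * b) = fmk a b := by
  rcases he with he | he <;> subst he
  · simp
  · rw [show (-1 : ℤ) * a = -a by ring, show (-1 : ℤ) * b = -b by ring, fmk_neg]

lemma ncard3_of {α : Type*} {a b c : α} (h1 : a ≠ b) (h2 : a ≠ c) (h3 : b ≠ c) :
    ({a, b, c} : Set α).ncard = 3 :=
  Set.ncard_eq_three.mpr ⟨a, b, c, h1, h2, h3, rfl⟩

lemma ne_of_ncard3 {α : Type*} {a b c : α} (h : ({a, b, c} : Set α).ncard = 3) :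
    a ≠ b ∧ a ≠ c ∧ b ≠ c := by
  refine ⟨?_, ?_, ?_⟩ <;> rintro rfl
  · have e : ({a, a, c} : Set α) = {a, c} := by ext x; simp only [Set.mem_insert_iff, Set.mem_singleton_iff]; tauto
    rw [e] at h
    have h2 := Set.ncard_insert_le a ({c} : Set α)
    simp [Set.ncard_singleton] at h2
    omega
  · have e : ({a, b, a} : Set α) = {a, b} := by ext x; simp only [Set.mem_insert_iff, Set.mem_singleton_iff]; tauto
    rw [e] at h
    have h2 := Set.ncard_insert_le a ({b} : Set α)
    simp [Set.ncard_singleton] at h2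
    omega
  · have e : ({a, b, b} : Set α) = {a, b} := by ext x; simp only [Set.mem_insert_iff, Set.mem_singleton_iff]; tauto
    rw [e] at h
    have h2 := Set.ncard_insert_le a ({b} : Set α)
    simp [Set.ncard_singleton] at h2
    omega

lemma fareyNbr_symm {x y : QInf} (h : FareyNbr x y) : FareyNbr y x := by
  rwa [FareyNbr, fdist_symm]

lemma pairwise3 {a b c : QInf} (hab : FareyNbr a b) (hac : FareyNbr a c) (hbc : FareyNbr b c) :
    ({a, b, c} : Set QInf).Pairwise FareyNbr := by
  intro x hx y hy hxy
  simp only [Set.mem_insert_iff, Set.mem_singleton_iff] at hx hy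
  rcases hx with rfl | rfl | rfl <;> rcases hy with rfl | rfl | rfl <;>
    first
      | exact absurd rfl hxy
      | assumption
      | exact fareyNbr_symm hab
      | exact fareyNbr_symm hac
      | exact fareyNbr_symm hbc

/-- If `p` and `q` are Farey neighbours, then there are exactly two elements `w` of
`ℚ∞` such that `{p, q, w}` is a Farey triple, namely `w = p ⊕ q` and `w = p ⊖ q`;
moreover these two elements are distinct. -/
theorem fareyNbr_triple_completions (p q : QInf) (h : FareyNbr p q) :
    (∀ w : QInf, IsFareyTriple {p, q, w} ↔ (w = fsum p q ∨ w = fdiff p q)) ∧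
      fsum p q ≠ fdiff p q := by
  have h1 : |fnum p * fden q - fnum q * fden p| = 1 := h
  have he : fnum p * fden q - fnum q * fden p = 1 ∨
      fnum p * fden q - fnum q * fden p = -1 := (abs_eq (by norm_num)).mp h1
  have hpq : p ≠ q := by
    rintro rfl
    simp at h1
  have hcs : IsCoprime (fnum p + fnum q) (fden p + fden q) := by
    rcases he with he | he
    · exact ⟨fden q, -fnum q, by linear_combination he⟩
    · exact ⟨-fden q, fnum q, by linear_combination -he⟩
  have hcd : IsCoprime (fnum p - fnum q) (fden p - fden q) := by
    rcases he with he | he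
    · exact ⟨fden q, -fnum q, by linear_combination he⟩
    · exact ⟨-fden q, fnum q, by linear_combination -he⟩
  have hrs : 0 < fden p + fden q := by
    have a1 := fden_nonneg p
    have a2 := fden_nonneg q
    by_contra h'
    have e1 : fden p = 0 := by omega
    have e2 : fden q = 0 := by omega
    rw [e1, e2] at h1
    simp at h1
  -- the four distance computations
  have hdps : fdist p (fsum p q) = 1 := by
    unfold fsum
    rw [fdist_fmk p hcs,
      show fnum p * (fden p + fden q) - (fnum p + fnum q) * fden p
        = fnum p * fden q - fnum q * fden p by ring]
    exact h1
  have hdqs : fdist q (fsum p q) = 1 := by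
    unfold fsum
    rw [fdist_fmk q hcs,
      show fnum q * (fden p + fden q) - (fnum p + fnum q) * fden q
        = -(fnum p * fden q - fnum q * fden p) by ring, abs_neg]
    exact h1
  have hdpd : fdist p (fdiff p q) = 1 := by
    unfold fdiff
    rw [fdist_fmk p hcd,
      show fnum p * (fden p - fden q) - (fnum p - fnum q) * fden p
        = -(fnum p * fden q - fnum q * fden p) by ring, abs_neg]
    exact h1
  have hdqd : fdist q (fdiff p q) = 1 := by
    unfold fdiff
    rw [fdist_fmk q hcd,
      show fnum q * (fden p - fden q) - (fnum p - fnum q) * fden q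
        = -(fnum p * fden q - fnum q * fden p) by ring, abs_neg]
    exact h1
  have hsn : fnum (fsum p q) = fnum p + fnum q := fnum_fmk hrs hcs
  have hsd : fden (fsum p q) = fden p + fden q := fden_fmk hrs hcs
  have hne : fsum p q ≠ fdiff p q := by
    have h2 : fdist (fsum p q) (fdiff p q) = 2 := by
      unfold fdiff
      rw [fdist_fmk _ hcd, hsn, hsd,
        show (fnum p + fnum q) * (fden p - fden q) - (fnum p - fnum q) * (fden p + fden q)
          = -2 * (fnum p * fden q - fnum q * fden p) by ring, abs_mul, h1]
      norm_num
    intro heq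
    rw [heq, fdist_self] at h2
    norm_num at h2
  have hsp : fsum p q ≠ p := by
    intro heq
    rw [heq, fdist_self] at hdps
    norm_num at hdps
  have hsq : fsum p q ≠ q := by
    intro heq
    rw [heq, fdist_self] at hdqs
    norm_num at hdqs
  have hdp : fdiff p q ≠ p := by
    intro heq
    rw [heq, fdist_self] at hdpd
    norm_num at hdpd
  have hdq : fdiff p q ≠ q := by
    intro heq
    rw [heq, fdist_self] at hdqd
    norm_num at hdqd
  refine ⟨fun w => ⟨fun htrip => ?_, fun hw => ?_⟩, hne⟩
  · -- forward direction
    obtain ⟨hcard, hpair⟩ := htrip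
    obtain ⟨_, hpw, hqw⟩ := ne_of_ncard3 hcard
    have hA : FareyNbr p w := hpair (by simp) (by simp) hpw
    have hB : FareyNbr q w := hpair (by simp) (by simp) hqw
    have h1A : |fnum p * fden w - fnum w * fden p| = 1 := hA
    have h1B : |fnum q * fden w - fnum w * fden q| = 1 := hB
    set A := fnum p * fden w - fnum w * fden p with hAdef
    set B := fnum q * fden w - fnum w * fden q with hBdef
    set E := fnum p * fden q - fnum q * fden p with hEdef
    have ha : A = 1 ∨ A = -1 := (abs_eq (by norm_num)).mp h1A
    have hb : B = 1 ∨ B = -1 := (abs_eq (by norm_num)).mp h1B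
    have hEE : E * E = 1 := by rcases he with he' | he' <;> rw [he'] <;> norm_num
    have key1 : fnum w * E = A * fnum q - B * fnum p := by
      rw [hAdef, hBdef, hEdef]; ring
    have key2 : fden w * E = A * fden q - B * fden p := by
      rw [hAdef, hBdef, hEdef]; ring
    have hw_num : fnum w = (A * fnum q - B * fnum p) * E := by
      calc fnum w = fnum w * (E * E) := by rw [hEE, mul_one]
        _ = (fnum w * E) * E := by ring
        _ = (A * fnum q - B * fnum p) * E := by rw [key1]
    have hw_den : fden w = (A * fden q - B * fden p) * E := by
      calc fden w = fden w * (E * E) := by rw [hEE, mul_one]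
        _ = (fden w * E) * E := by ring
        _ = (A * fden q - B * fden p) * E := by rw [key2]
    have hnegE : -E = 1 ∨ -E = -1 := by rcases he with he' | he' <;> omega
    rcases ha with ha | ha <;> rcases hb with hb | hb
    · -- A = 1, B = 1 : w = fdiff p q
      right
      have h1' : fnum w = (-E) * (fnum p - fnum q) := by rw [hw_num, ha, hb]; ring
      have h2' : fden w = (-E) * (fden p - fden q) := by rw [hw_den, ha, hb]; ring
      calc w = fmk (fnum w) (fden w) := (fmk_self w).symm
        _ = fmk ((-E) * (fnum p - fnum q)) ((-E) * (fden p - fden q)) := by rw [h1', h2']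
        _ = fmk (fnum p - fnum q) (fden p - fden q) := fmk_smul hnegE _ _
        _ = fdiff p q := rfl
    · -- A = 1, B = -1 : w = fsum p q
      left
      have h1' : fnum w = E * (fnum p + fnum q) := by rw [hw_num, ha, hb]; ring
      have h2' : fden w = E * (fden p + fden q) := by rw [hw_den, ha, hb]; ring
      calc w = fmk (fnum w) (fden w) := (fmk_self w).symm
        _ = fmk (E * (fnum p + fnum q)) (E * (fden p + fden q)) := by rw [h1', h2']
        _ = fmk (fnum p + fnum q) (fden p + fden q) := fmk_smul he _ _
        _ = fsum p q := rfl
    · -- A = -1, B = 1 : w = fsum p q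
      left
      have h1' : fnum w = (-E) * (fnum p + fnum q) := by rw [hw_num, ha, hb]; ring
      have h2' : fden w = (-E) * (fden p + fden q) := by rw [hw_den, ha, hb]; ring
      calc w = fmk (fnum w) (fden w) := (fmk_self w).symm
        _ = fmk ((-E) * (fnum p + fnum q)) ((-E) * (fden p + fden q)) := by rw [h1', h2']
        _ = fmk (fnum p + fnum q) (fden p + fden q) := fmk_smul hnegE _ _
        _ = fsum p q := rfl
    · -- A = -1, B = -1 : w = fdiff p q
      right
      have h1' : fnum w = E * (fnum p - fnum q) := by rw [hw_num, ha, hb]; ring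
      have h2' : fden w = E * (fden p - fden q) := by rw [hw_den, ha, hb]; ring
      calc w = fmk (fnum w) (fden w) := (fmk_self w).symm
        _ = fmk (E * (fnum p - fnum q)) (E * (fden p - fden q)) := by rw [h1', h2']
        _ = fmk (fnum p - fnum q) (fden p - fden q) := fmk_smul he _ _
        _ = fdiff p q := rfl
  · -- reverse direction
    rcases hw with rfl | rfl
    · exact ⟨ncard3_of hpq hsp.symm hsq.symm, pairwise3 h hdps hdqs⟩
    · exact ⟨ncard3_of hpq hdp.symm hdq.symm, pairwise3 h hdpd hdqd⟩
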